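/- Consider sl(2,ℂ)⊕sl(2,ℂ) with standard bases J₁,J₂,J₃ and L₁,L₂,L₃ satisfying [J_a,J_b] = ε_{abc} J_c (and similarly for L, with [J_a, L_b]=0), where ε is interpreted via the complexified so(3) relations [J₁,J₂]=J₃ etc. Then s₊ := span_ℂ{J₃ + i L₃, J₁ + i J₂, L₁ + i L₂} and s₋ := span_ℂ{J₃ − i L₃, J₁ − i J₂, L₁ − i L₂} are solvable Lie subalgebras with s₊ ⊕ s₋ = sl(2,ℂ) ⊕ sl(2,ℂ) as vector spaces. -/

import Mathlib

open Submodule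

section aux
variable {g : Type*} [LieRing g] [LieAlgebra ℂ g]

lemma span_bracket (s : Set g) (q : Submodule ℂ g)
    (h : ∀ x ∈ s, ∀ y ∈ s, ⁅x, y⁆ ∈ q) :
    ∀ x ∈ Submodule.span ℂ s, ∀ y ∈ Submodule.span ℂ s, ⁅x, y⁆ ∈ q := by
  intro x hx
  induction hx using Submodule.span_induction with
  | mem x hxs =>
    intro y hy
    induction hy using Submodule.span_induction with
    | mem y hys => exact h x hxs y hys
    | zero => simp
    | add y z _ _ hy hz => rw [lie_add]; exact q.add_mem hy hz
    | smul c y _ hy => rw [lie_smul]; exact q.smul_mem c hy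
  | zero => intro y hy; simp
  | add x z _ _ hx hz => intro y hy; rw [add_lie]; exact q.add_mem (hx y hy) (hz y hy)
  | smul c x _ hx => intro y hy; rw [smul_lie]; exact q.smul_mem c (hx y hy)

lemma pair_brackets (u v w : g) (α β : ℂ)
    (h1 : ⁅u, v⁆ = α • v) (h2 : ⁅u, w⁆ = β • w) (h3 : ⁅v, w⁆ = 0) :
    ∀ x ∈ ({u, v, w} : Set g), ∀ y ∈ ({u, v, w} : Set g),
      ⁅x, y⁆ ∈ Submodule.span ℂ ({v, w} : Set g) := by
  have hv : v ∈ Submodule.span ℂ ({v, w} : Set g) := subset_span (by simp)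
  have hw : w ∈ Submodule.span ℂ ({v, w} : Set g) := subset_span (by simp)
  intro x hx y hy
  simp only [Set.mem_insert_iff, Set.mem_singleton_iff] at hx hy
  rcases hx with rfl | rfl | rfl <;> rcases hy with rfl | rfl | rfl
  · simp
  · rw [h1]; exact smul_mem _ _ hv
  · rw [h2]; exact smul_mem _ _ hw
  · rw [← lie_skew, h1]; exact neg_mem (smul_mem _ _ hv)
  · simp
  · rw [h3]; exact zero_mem _
  · rw [← lie_skew, h2]; exact neg_mem (smul_mem _ _ hw)
  · rw [← lie_skew, h3, neg_zero]; exact zero_mem _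
  · simp

lemma span_triple_closed (u v w : g) (α β : ℂ)
    (h1 : ⁅u, v⁆ = α • v) (h2 : ⁅u, w⁆ = β • w) (h3 : ⁅v, w⁆ = 0) :
    ∀ x ∈ Submodule.span ℂ ({u, v, w} : Set g),
      ∀ y ∈ Submodule.span ℂ ({u, v, w} : Set g),
        ⁅x, y⁆ ∈ Submodule.span ℂ ({u, v, w} : Set g) := by
  intro x hx y hy
  have := span_bracket {u, v, w} (Submodule.span ℂ ({v, w} : Set g))
    (pair_brackets u v w α β h1 h2 h3) x hx y hy
  exact span_mono (by intro z hz; simp only [Set.mem_insert_iff, Set.mem_singleton_iff] at hz ⊢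
                      tauto) this

lemma solvable_aux (u v w : g) (α β : ℂ)
    (h1 : ⁅u, v⁆ = α • v) (h2 : ⁅u, w⁆ = β • w) (h3 : ⁅v, w⁆ = 0)
    (S : LieSubalgebra ℂ g)
    (hS : S.toSubmodule = Submodule.span ℂ ({u, v, w} : Set g)) :
    LieAlgebra.IsSolvable S := by
  set q : Submodule ℂ g := Submodule.span ℂ ({v, w} : Set g) with hq
  have hqle : q ≤ Submodule.span ℂ ({u, v, w} : Set g) :=
    span_mono (by intro z hz; simp only [Set.mem_insert_iff, Set.mem_singleton_iff] at hz ⊢; tauto)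
  have hb : ∀ x ∈ Submodule.span ℂ ({u, v, w} : Set g),
      ∀ y ∈ Submodule.span ℂ ({u, v, w} : Set g), ⁅x, y⁆ ∈ q :=
    span_bracket _ _ (pair_brackets u v w α β h1 h2 h3)
  have hab : ∀ x ∈ q, ∀ y ∈ q, ⁅x, y⁆ ∈ (⊥ : Submodule ℂ g) := by
    apply span_bracket
    intro p hp r hr
    have h3' : ⁅w, v⁆ = 0 := by rw [← lie_skew, h3, neg_zero]
    simp only [Set.mem_insert_iff, Set.mem_singleton_iff] at hp hr
    rcases hp with rfl | rfl <;> rcases hr with rfl | rfl <;> simp [h3, h3']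
  have hmemS : ∀ x : S, (x : g) ∈ Submodule.span ℂ ({u, v, w} : Set g) := by
    intro x; rw [← hS]; exact x.2
  -- N : elements of S whose coercion lies in q
  let N : LieSubmodule ℂ S S :=
    { carrier := {x : S | (x : g) ∈ q}
      add_mem' := fun {a b} ha hb => by simp only [Set.mem_setOf_eq] at *; exact q.add_mem ha hb
      zero_mem' := by simp only [Set.mem_setOf_eq]; exact q.zero_mem
      smul_mem' := fun c a ha => by simp only [Set.mem_setOf_eq] at *; exact q.smul_mem c ha
      lie_mem := fun {a x} hx => by
        simp only [Set.mem_setOf_eq] at *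
        exact hb _ (hmemS a) _ (hqle hx) }
  have hD1 : LieAlgebra.derivedSeries ℂ S 1 ≤ N := by
    rw [LieAlgebra.derivedSeries_def, LieAlgebra.derivedSeriesOfIdeal_succ,
      LieAlgebra.derivedSeriesOfIdeal_zero, LieSubmodule.lieIdeal_oper_eq_span,
      LieSubmodule.lieSpan_le]
    rintro m ⟨x, y, rfl⟩
    show ((⁅(x : S), (y : S)⁆ : S) : g) ∈ q
    exact hb _ (hmemS x) _ (hmemS y)
  rw [LieAlgebra.isSolvable_iff ℂ]
  refine ⟨2, ?_⟩
  rw [show (2 : ℕ) = 1 + 1 from rfl, LieAlgebra.derivedSeries_def,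
    LieAlgebra.derivedSeriesOfIdeal_succ, ← LieAlgebra.derivedSeries_def]
  rw [LieSubmodule.lieIdeal_oper_eq_span, LieSubmodule.lieSpan_eq_bot_iff]
  rintro m ⟨x, y, rfl⟩
  have hx : ((x : S) : g) ∈ q := hD1 x.2
  have hy : ((y : S) : g) ∈ q := hD1 y.2
  have : ((⁅(x : S), (y : S)⁆ : S) : g) = 0 := by
    have := hab _ hx _ hy
    simpa using this
  exact Subtype.ext this

lemma mem_span_triple {x u v w : g} (h : x ∈ Submodule.span ℂ ({u, v, w} : Set g)) :
    ∃ a b c : ℂ, x = a • u + b • v + c • w := by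
  obtain ⟨a, y, hy, rfl⟩ := Submodule.mem_span_insert.mp h
  obtain ⟨b, z, hz, rfl⟩ := Submodule.mem_span_insert.mp hy
  obtain ⟨c, rfl⟩ := Submodule.mem_span_singleton.mp hz
  exact ⟨a, b, c, by abel⟩

end aux

/-- in `sl(2,ℂ) ⊕ sl(2,ℂ)` with standard (so(3)-type) bases
`J₁,J₂,J₃` and `L₁,L₂,L₃` (`[J₁,J₂]=J₃` cyclically, similarly for `L`, `[J,L]=0`),
the spans `s₊ = span{J₃ + iL₃, J₁ + iJ₂, L₁ + iL₂}` and
`s₋ = span{J₃ − iL₃, J₁ − iJ₂, L₁ − iL₂}` are solvable Lie subalgebras with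
`s₊ ⊕ s₋ = sl(2,ℂ) ⊕ sl(2,ℂ)` as vector spaces. -/
theorem sl2_sl2_double_decomposition {g : Type*} [LieRing g] [LieAlgebra ℂ g]
    (J L : Fin 3 → g)
    (hJ12 : ⁅J 0, J 1⁆ = J 2) (hJ23 : ⁅J 1, J 2⁆ = J 0) (hJ31 : ⁅J 2, J 0⁆ = J 1)
    (hL12 : ⁅L 0, L 1⁆ = L 2) (hL23 : ⁅L 1, L 2⁆ = L 0) (hL31 : ⁅L 2, L 0⁆ = L 1)
    (hJL : ∀ a b, ⁅J a, L b⁆ = 0)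
    (hindep : LinearIndependent ℂ (Sum.elim J L))
    (hspan : Submodule.span ℂ (Set.range J ∪ Set.range L) = ⊤)
    (sp sm : Submodule ℂ g)
    (hsp : sp = Submodule.span ℂ
      {J 2 + Complex.I • L 2, J 0 + Complex.I • J 1, L 0 + Complex.I • L 1})
    (hsm : sm = Submodule.span ℂ
      {J 2 - Complex.I • L 2, J 0 - Complex.I • J 1, L 0 - Complex.I • L 1}) :
    (∀ x ∈ sp, ∀ y ∈ sp, ⁅x, y⁆ ∈ sp) ∧
    (∀ x ∈ sm, ∀ y ∈ sm, ⁅x, y⁆ ∈ sm) ∧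
    (∀ S : LieSubalgebra ℂ g, S.toSubmodule = sp → LieAlgebra.IsSolvable S) ∧
    (∀ S : LieSubalgebra ℂ g, S.toSubmodule = sm → LieAlgebra.IsSolvable S) ∧
    sp ⊓ sm = ⊥ ∧ sp ⊔ sm = ⊤ := by
  have hI := Complex.I_mul_I
  have hJ21 : ⁅J 2, J 1⁆ = -J 0 := by rw [← lie_skew, hJ23]
  have hL21 : ⁅L 2, L 1⁆ = -L 0 := by rw [← lie_skew, hL23]
  have hLJ : ∀ a b, ⁅L a, J b⁆ = 0 := fun a b => by rw [← lie_skew, hJL, neg_zero]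
  -- brackets for sp
  have hAB : ⁅J 2 + Complex.I • L 2, J 0 + Complex.I • J 1⁆
      = (-Complex.I) • (J 0 + Complex.I • J 1) := by
    simp only [lie_add, add_lie, lie_smul, smul_lie, hJ31, hJ21, hJL, hLJ, smul_zero, zero_add,
      add_zero, smul_neg, smul_smul, hI, neg_one_smul, smul_add, neg_smul, neg_neg]
    match_scalars <;> first | ring1 | (ring_nf; simp [Complex.I_sq]; try ring)
  have hAC : ⁅J 2 + Complex.I • L 2, L 0 + Complex.I • L 1⁆
      = (1 : ℂ) • (L 0 + Complex.I • L 1) := by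
    simp only [lie_add, add_lie, lie_smul, smul_lie, hL31, hL21, hJL, hLJ, smul_zero, zero_add,
      add_zero, smul_neg, smul_smul, hI, neg_one_smul, smul_add, neg_smul, neg_neg, one_smul]
    match_scalars <;> first | ring1 | (ring_nf; simp [Complex.I_sq]; try ring)
  have hBC : ⁅J 0 + Complex.I • J 1, L 0 + Complex.I • L 1⁆ = 0 := by
    simp [lie_add, add_lie, lie_smul, smul_lie, hJL]
  -- brackets for sm
  have hAB' : ⁅J 2 - Complex.I • L 2, J 0 - Complex.I • J 1⁆
      = Complex.I • (J 0 - Complex.I • J 1) := by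
    simp only [sub_eq_add_neg, lie_add, add_lie, lie_smul, smul_lie, neg_lie, lie_neg, hJ31, hJ21,
      hJL, hLJ, smul_zero, zero_add, add_zero, neg_zero, smul_neg, smul_smul, hI, neg_one_smul,
      smul_add, neg_smul, neg_neg]
    match_scalars <;> first | ring1 | (ring_nf; simp [Complex.I_sq]; try ring)
  have hAC' : ⁅J 2 - Complex.I • L 2, L 0 - Complex.I • L 1⁆
      = (1 : ℂ) • (L 0 - Complex.I • L 1) := by
    simp only [sub_eq_add_neg, lie_add, add_lie, lie_smul, smul_lie, neg_lie, lie_neg, hL31, hL21,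
      hJL, hLJ, smul_zero, zero_add, add_zero, neg_zero, smul_neg, smul_smul, hI, neg_one_smul,
      smul_add, neg_smul, neg_neg, one_smul]
    match_scalars <;> first | ring1 | (ring_nf; simp [Complex.I_sq]; try ring)
  have hBC' : ⁅J 0 - Complex.I • J 1, L 0 - Complex.I • L 1⁆ = 0 := by
    simp [sub_eq_add_neg, lie_add, add_lie, lie_smul, smul_lie, hJL, hLJ]
  refine ⟨?_, ?_, ?_, ?_, ?_, ?_⟩
  · rw [hsp]; exact span_triple_closed _ _ _ _ _ hAB hAC hBC
  · rw [hsm]; exact span_triple_closed _ _ _ _ _ hAB' hAC' hBC'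
  · intro S hS; rw [hsp] at hS; exact solvable_aux _ _ _ _ _ hAB hAC hBC S hS
  · intro S hS; rw [hsm] at hS; exact solvable_aux _ _ _ _ _ hAB' hAC' hBC' S hS
  · -- trivial intersection
    rw [eq_bot_iff]
    rintro x ⟨hx1, hx2⟩
    rw [hsp] at hx1; rw [hsm] at hx2
    obtain ⟨a, b, c, rfl⟩ := mem_span_triple hx1
    obtain ⟨a', b', c', hx⟩ := mem_span_triple hx2
    set coef : Fin 3 ⊕ Fin 3 → ℂ :=
      Sum.elim ![b - b', Complex.I * b + Complex.I * b', a - a']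
        ![c - c', Complex.I * c + Complex.I * c', Complex.I * a + Complex.I * a'] with hcoef
    have hsum : ∑ i, coef i • Sum.elim J L i = 0 := by
      rw [Fintype.sum_sum_type]
      simp only [Sum.elim_inl, Sum.elim_inr, Fin.sum_univ_three, hcoef,
        Matrix.cons_val_zero, Matrix.cons_val_one, Matrix.head_cons, Matrix.cons_val_two,
        Matrix.tail_cons]
      have key : (b - b') • J 0 + (Complex.I * b + Complex.I * b') • J 1 + (a - a') • J 2
            + ((c - c') • L 0 + (Complex.I * c + Complex.I * c') • L 1
              + (Complex.I * a + Complex.I * a') • L 2)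
          = (a • (J 2 + Complex.I • L 2) + b • (J 0 + Complex.I • J 1)
              + c • (L 0 + Complex.I • L 1))
            - (a' • (J 2 - Complex.I • L 2) + b' • (J 0 - Complex.I • J 1)
              + c' • (L 0 - Complex.I • L 1)) := by
        module
      rw [key, hx, sub_self]
    have hco := Fintype.linearIndependent_iff.mp hindep coef hsum
    have ha1 : a - a' = 0 := hco (Sum.inl 2)
    have ha2 : Complex.I * a + Complex.I * a' = 0 := hco (Sum.inr 2)
    have hb1 : b - b' = 0 := hco (Sum.inl 0)
    have hb2 : Complex.I * b + Complex.I * b' = 0 := hco (Sum.inl 1)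
    have hc1 : c - c' = 0 := hco (Sum.inr 0)
    have hc2 : Complex.I * c + Complex.I * c' = 0 := hco (Sum.inr 1)
    have hIne : (Complex.I : ℂ) ≠ 0 := Complex.I_ne_zero
    have ha : a = 0 := by
      have h1 : a = a' := sub_eq_zero.mp ha1
      have h2 : a + a' = 0 := by
        have hz : Complex.I * (a + a') = 0 := by linear_combination ha2
        exact (mul_eq_zero.mp hz).resolve_left hIne
      rw [h1] at h2 ⊢; linear_combination (1/2 : ℂ) * h2
    have hb : b = 0 := by
      have h1 : b = b' := sub_eq_zero.mp hb1
      have h2 : b + b' = 0 := by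
        have hz : Complex.I * (b + b') = 0 := by linear_combination hb2
        exact (mul_eq_zero.mp hz).resolve_left hIne
      rw [h1] at h2 ⊢; linear_combination (1/2 : ℂ) * h2
    have hc : c = 0 := by
      have h1 : c = c' := sub_eq_zero.mp hc1
      have h2 : c + c' = 0 := by
        have hz : Complex.I * (c + c') = 0 := by linear_combination hc2
        exact (mul_eq_zero.mp hz).resolve_left hIne
      rw [h1] at h2 ⊢; linear_combination (1/2 : ℂ) * h2
    rw [ha, hb, hc]
    simp
  · -- sup is top
    rw [eq_top_iff, ← hspan]
    apply Submodule.span_le.mpr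
    have hmemp : ∀ z ∈ ({J 2 + Complex.I • L 2, J 0 + Complex.I • J 1,
        L 0 + Complex.I • L 1} : Set g), z ∈ sp ⊔ sm := fun z hz =>
      Submodule.mem_sup_left (by rw [hsp]; exact Submodule.subset_span hz)
    have hmemm : ∀ z ∈ ({J 2 - Complex.I • L 2, J 0 - Complex.I • J 1,
        L 0 - Complex.I • L 1} : Set g), z ∈ sp ⊔ sm := fun z hz =>
      Submodule.mem_sup_right (by rw [hsm]; exact Submodule.subset_span hz)
    have hA : J 2 + Complex.I • L 2 ∈ sp ⊔ sm := hmemp _ (by simp)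
    have hB : J 0 + Complex.I • J 1 ∈ sp ⊔ sm := hmemp _ (by simp)
    have hC : L 0 + Complex.I • L 1 ∈ sp ⊔ sm := hmemp _ (by simp)
    have hA' : J 2 - Complex.I • L 2 ∈ sp ⊔ sm := hmemm _ (by simp)
    have hB' : J 0 - Complex.I • J 1 ∈ sp ⊔ sm := hmemm _ (by simp)
    have hC' : L 0 - Complex.I • L 1 ∈ sp ⊔ sm := hmemm _ (by simp)
    have hplus : ∀ u v : g, u + Complex.I • v ∈ sp ⊔ sm → u - Complex.I • v ∈ sp ⊔ sm →
        u ∈ sp ⊔ sm ∧ v ∈ sp ⊔ sm := by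
      intro u v h1 h2
      constructor
      · have hid : ((1:ℂ)/2) • (u + Complex.I • v) + ((1:ℂ)/2) • (u - Complex.I • v) = u := by
          module
        rw [← hid]
        exact Submodule.add_mem _ (Submodule.smul_mem _ _ h1) (Submodule.smul_mem _ _ h2)
      · have hid : (-Complex.I/2) • (u + Complex.I • v) + (Complex.I/2) • (u - Complex.I • v)
            = v := by
          match_scalars <;> first | ring1 | (ring_nf; simp [Complex.I_sq]; try ring)
        rw [← hid]
        exact Submodule.add_mem _ (Submodule.smul_mem _ _ h1) (Submodule.smul_mem _ _ h2)

    rintro x (⟨a, rfl⟩ | ⟨a, rfl⟩) <;> fin_cases a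
    · exact (hplus _ _ hB hB').1
    · exact (hplus _ _ hB hB').2
    · exact (hplus _ _ hA hA').1
    · exact (hplus _ _ hC hC').1
    · exact (hplus _ _ hC hC').2
    · exact (hplus _ _ hA hA').2
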